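/- Let {(A_{i,ℓ}, A_{i,r}, A_{i,c})}_{i∈I} be a family of triples of subalgebras of a noncommutative probability space (A,φ) that is combinatorially free-free-Boolean independent. Let n ≥ 1, χ : {1,…,n} → {ℓ,r,c}, and ω₁, ω₂ : {1,…,n} → I with ω₁({1,…,n}) ∩ ω₂({1,…,n}) = ∅, and let z_{1,k} ∈ A_{ω₁(k),χ(k)} and z_{2,k} ∈ A_{ω₂(k),χ(k)} for all k. Then κ_{χ,1ₙ}(z_{1,1}+z_{2,1},…,z_{1,n}+z_{2,n}) = κ_{χ,1ₙ}(z_{1,1},…,z_{1,n}) + κ_{χ,1ₙ}(z_{2,1},…,z_{2,n}). -/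

import Mathlib

namespace FFB

/-- The three letters ℓ, c, r labelling the faces. -/
inductive Letter : Type where
  | l | c | r
deriving DecidableEq

/-- `x` is one of the letters `ℓ`, `c`. -/
def isLC (x : Letter) : Prop := x = Letter.l ∨ x = Letter.c

variable {α : Type*}

/-- The total order `≺_χ` on the index set determined by `χ`:
the elements of `χ⁻¹{ℓ,c}` in increasing order followed by the elements of
`χ⁻¹{r}` in decreasing order. -/
def chiLT [LT α] (χ : α → Letter) (i j : α) : Prop :=
  (isLC (χ i) ∧ isLC (χ j) ∧ i < j)
  ∨ (isLC (χ i) ∧ χ j = Letter.r)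
  ∨ (χ i = Letter.r ∧ χ j = Letter.r ∧ j < i)

/-- A partition (equivalence relation) `π` is `χ`-noncrossing if there is no quadruple
`s₁ ≺_χ r₁ ≺_χ s₂ ≺_χ r₂` with `s₁ ∼ s₂`, `r₁ ∼ r₂` lying in different blocks. -/
def ChiNoncrossing [LT α] (χ : α → Letter) (π : Setoid α) : Prop :=
  ∀ s₁ r₁ s₂ r₂ : α, chiLT χ s₁ r₁ → chiLT χ r₁ s₂ → chiLT χ s₂ r₂ →
    π s₁ s₂ → π r₁ r₂ → π s₁ r₁

/-- A partition `π` is `χ`-interval if whenever `i < j < k`, `i ∼ k` and `χ j = c`,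
then `i, j, k` all lie in the same block. -/
def ChiInterval [LT α] (χ : α → Letter) (π : Setoid α) : Prop :=
  ∀ i j k : α, i < j → j < k → χ j = Letter.c → π i k → π i j

/-- The set of interval-bi-noncrossing partitions with respect to `χ`. -/
def IBNC [LT α] (χ : α → Letter) : Set (Setoid α) :=
  {π | ChiNoncrossing χ π ∧ ChiInterval χ π}

/-- The set of `χ`-noncrossing partitions. -/
def NC [LT α] (χ : α → Letter) : Set (Setoid α) :=
  {π | ChiNoncrossing χ π}

/-- Restriction of a partition of `α` to a subset `V ⊆ α`. -/
def restrict (V : Set α) (σ : Setoid α) : Setoid V := Setoid.comap Subtype.val σ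

/-- Restriction of `χ` to a subset `V ⊆ α`. -/
def restChi (V : Set α) (χ : α → Letter) : V → Letter := fun x => χ x.1

/- `mu` is the Möbius function of the finite poset `P` (with the induced order):
it is the (two-sided) convolution inverse of the zeta function. -/
open Classical in
def IsMobius {β : Type*} [PartialOrder β] (P : Set β) (mu : β → β → ℂ) : Prop :=
  ∀ a ∈ P, ∀ b ∈ P, a ≤ b →
    ((∑ᶠ c ∈ {c | c ∈ P ∧ a ≤ c ∧ c ≤ b}, mu a c) = if a = b then 1 else 0) ∧
    ((∑ᶠ c ∈ {c | c ∈ P ∧ a ≤ c ∧ c ≤ b}, mu c b) = if a = b then 1 else 0)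

section Moments

variable {A : Type*} [Ring A] [LinearOrder α] [Finite α]

/-- `φ_V(z₁,…,zₙ) = φ(z_{l₁} ⋯ z_{l_k})` where `V = {l₁ < ⋯ < l_k}`. -/
noncomputable def phiV (φ : A → ℂ) (z : α → A) (V : Set α) : ℂ :=
  φ (((Set.toFinite V).toFinset.sort (· ≤ ·)).map z).prod

/-- `φ_σ(z₁,…,zₙ) = ∏_{V ∈ σ} φ_V(z₁,…,zₙ)`. -/
noncomputable def phiPart (φ : A → ℂ) (z : α → A) (σ : Setoid α) : ℂ :=
  ∏ᶠ q : Quotient σ, phiV φ z {y | Quotient.mk σ y = q}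

/-- The free-free-Boolean cumulant
`κ_{χ,π}(z₁,…,zₙ) = Σ_{σ ∈ IBNC(χ), σ ≤ π} μ_{IBNC(χ)}(σ,π) φ_σ(z₁,…,zₙ)`,
where `mu` is (a function which is) the Möbius function of `IBNC(χ)`. -/
noncomputable def cum (φ : A → ℂ) (χ : α → Letter)
    (mu : Setoid α → Setoid α → ℂ) (z : α → A) (π : Setoid α) : ℂ :=
  ∑ᶠ σ ∈ {σ | σ ∈ IBNC χ ∧ σ ≤ π}, mu σ π * phiPart φ z σ

end Moments

/-- Combinatorial free-free-Boolean independence: mixed cumulants vanish.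
`F i x` is the face of the `i`-th triple labelled by the letter `x`. -/
def CombFFB {A : Type*} [Ring A] [Algebra ℂ A] (φ : A →ₗ[ℂ] ℂ) {I : Type*}
    (F : I → Letter → NonUnitalSubalgebra ℂ A) : Prop :=
  ∀ (n : ℕ) (χ : Fin n → Letter) (ω : Fin n → I) (z : Fin n → A),
    (∀ k, z k ∈ F (ω k) (χ k)) → (¬ ∃ i, ∀ k, ω k = i) →
    ∀ mu : Setoid (Fin n) → Setoid (Fin n) → ℂ, IsMobius (IBNC χ) mu →
      cum (⇑φ) χ mu z ⊤ = 0

end FFB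

namespace FFB


section Aux

set_option linter.unusedSectionVars false

variable {A : Type*} [Ring A] [Algebra ℂ A]



lemma map_update_prod_of_not_mem {α : Type*} [DecidableEq α] (L : List α) (z : α → A)
    (k : α) (hk : k ∉ L) (v : A) :
    (L.map (Function.update z k v)).prod = (L.map z).prod := by
  congr 1
  exact List.map_congr_left (fun x hx => Function.update_of_ne (by rintro rfl; exact hk hx) _ _)

lemma map_update_prod_add {α : Type*} [DecidableEq α] (L : List α) (hL : L.Nodup)
    (z : α → A) (k : α) (hk : k ∈ L) (a b : A) :
    (L.map (Function.update z k (a + b))).prod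
      = (L.map (Function.update z k a)).prod + (L.map (Function.update z k b)).prod := by
  induction L with
  | nil => simp at hk
  | cons h t ih =>
    rcases List.nodup_cons.mp hL with ⟨hht, htn⟩
    by_cases hhk : h = k
    · subst hhk
      have hkt : h ∉ t := hht
      simp only [List.map_cons, List.prod_cons, Function.update_self]
      rw [map_update_prod_of_not_mem t z h hkt, map_update_prod_of_not_mem t z h hkt,
        map_update_prod_of_not_mem t z h hkt, add_mul]
    · have hkt : k ∈ t := by rcases List.mem_cons.mp hk with h' | h'
                             · exact absurd h'.symm hhk
                             · exact h'
      simp only [List.map_cons, List.prod_cons, Function.update_of_ne hhk]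
      rw [ih htn hkt, mul_add]

lemma map_update_prod_smul {α : Type*} [DecidableEq α] (L : List α) (hL : L.Nodup)
    (z : α → A) (k : α) (hk : k ∈ L) (c : ℂ) (a : A) :
    (L.map (Function.update z k (c • a))).prod
      = c • (L.map (Function.update z k a)).prod := by
  induction L with
  | nil => simp at hk
  | cons h t ih =>
    rcases List.nodup_cons.mp hL with ⟨hht, htn⟩
    by_cases hhk : h = k
    · subst hhk
      simp only [List.map_cons, List.prod_cons, Function.update_self]
      rw [map_update_prod_of_not_mem t z h hht, map_update_prod_of_not_mem t z h hht,
        smul_mul_assoc]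
    · have hkt : k ∈ t := by rcases List.mem_cons.mp hk with h' | h'
                             · exact absurd h'.symm hhk
                             · exact h'
      simp only [List.map_cons, List.prod_cons, Function.update_of_ne hhk]
      rw [ih htn hkt, mul_smul_comm]


variable {α : Type*} [LinearOrder α] [Finite α] [DecidableEq α]

instance : Finite (Setoid α) :=
  Finite.of_injective (fun s : Setoid α => s.r)
    (fun a b h => Setoid.ext fun {x y} => iff_of_eq (congrFun (congrFun h x) y))

lemma phiV_update_not_mem (φ : A →ₗ[ℂ] ℂ) (z : α → A) (k : α) (v : A) (V : Set α)
    (hk : k ∉ V) : phiV (⇑φ) (Function.update z k v) V = phiV (⇑φ) z V := by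
  classical
  unfold phiV
  rw [map_update_prod_of_not_mem]
  intro h
  exact hk (((Set.toFinite V).mem_toFinset).mp ((Finset.mem_sort _).mp h))

lemma phiV_update_add (φ : A →ₗ[ℂ] ℂ) (z : α → A) (k : α) (a b : A) (V : Set α)
    (hk : k ∈ V) :
    phiV (⇑φ) (Function.update z k (a + b)) V
      = phiV (⇑φ) (Function.update z k a) V + phiV (⇑φ) (Function.update z k b) V := by
  classical
  unfold phiV
  rw [map_update_prod_add _ (Finset.sort_nodup _ _) _ _
    ((Finset.mem_sort _).mpr (((Set.toFinite V).mem_toFinset).mpr hk)), map_add]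

lemma phiV_update_smul (φ : A →ₗ[ℂ] ℂ) (z : α → A) (k : α) (c : ℂ) (a : A) (V : Set α)
    (hk : k ∈ V) :
    phiV (⇑φ) (Function.update z k (c • a)) V
      = c • phiV (⇑φ) (Function.update z k a) V := by
  classical
  unfold phiV
  rw [map_update_prod_smul _ (Finset.sort_nodup _ _) _ _
    ((Finset.mem_sort _).mpr (((Set.toFinite V).mem_toFinset).mpr hk)), map_smul]

lemma phiPart_update_add (φ : A →ₗ[ℂ] ℂ) (σ : Setoid α) (z : α → A) (k : α) (a b : A) :
    phiPart (⇑φ) (Function.update z k (a + b)) σ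
      = phiPart (⇑φ) (Function.update z k a) σ + phiPart (⇑φ) (Function.update z k b) σ := by
  classical
  cases nonempty_fintype (Quotient σ)
  simp only [phiPart, finprod_eq_prod_of_fintype]
  set q₀ := Quotient.mk σ k with hq₀
  rw [Finset.prod_eq_mul_prod_sdiff_singleton_of_mem (Finset.mem_univ q₀),
    Finset.prod_eq_mul_prod_sdiff_singleton_of_mem (Finset.mem_univ q₀),
    Finset.prod_eq_mul_prod_sdiff_singleton_of_mem (Finset.mem_univ q₀)]
  have hrest : ∀ v : A,
      (∏ q ∈ Finset.univ \ {q₀}, phiV (⇑φ) (Function.update z k v) {y | Quotient.mk σ y = q})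
        = ∏ q ∈ Finset.univ \ {q₀}, phiV (⇑φ) z {y | Quotient.mk σ y = q} := by
    intro v
    refine Finset.prod_congr rfl fun q hq => ?_
    refine phiV_update_not_mem φ z k v _ ?_
    intro hkq
    exact (Finset.mem_sdiff.mp hq).2 (Finset.mem_singleton.mpr (hkq ▸ hq₀).symm)
  rw [hrest, hrest, hrest, phiV_update_add φ z k a b {y | Quotient.mk σ y = q₀} rfl, add_mul]

lemma phiPart_update_smul (φ : A →ₗ[ℂ] ℂ) (σ : Setoid α) (z : α → A) (k : α) (c : ℂ) (a : A) :
    phiPart (⇑φ) (Function.update z k (c • a)) σ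
      = c • phiPart (⇑φ) (Function.update z k a) σ := by
  classical
  cases nonempty_fintype (Quotient σ)
  simp only [phiPart, finprod_eq_prod_of_fintype]
  set q₀ := Quotient.mk σ k with hq₀
  rw [Finset.prod_eq_mul_prod_sdiff_singleton_of_mem (Finset.mem_univ q₀),
    Finset.prod_eq_mul_prod_sdiff_singleton_of_mem (Finset.mem_univ q₀)]
  have hrest : ∀ v : A,
      (∏ q ∈ Finset.univ \ {q₀}, phiV (⇑φ) (Function.update z k v) {y | Quotient.mk σ y = q})
        = ∏ q ∈ Finset.univ \ {q₀}, phiV (⇑φ) z {y | Quotient.mk σ y = q} := by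
    intro v
    refine Finset.prod_congr rfl fun q hq => ?_
    refine phiV_update_not_mem φ z k v _ ?_
    intro hkq
    exact (Finset.mem_sdiff.mp hq).2 (Finset.mem_singleton.mpr (hkq ▸ hq₀).symm)
  rw [hrest, hrest, phiV_update_smul φ z k c a {y | Quotient.mk σ y = q₀} rfl, smul_mul_assoc]

lemma cum_update_add (φ : A →ₗ[ℂ] ℂ) (χ : α → Letter)
    (mu : Setoid α → Setoid α → ℂ) (z : α → A) (k : α) (a b : A) :
    cum (⇑φ) χ mu (Function.update z k (a + b)) ⊤
      = cum (⇑φ) χ mu (Function.update z k a) ⊤ + cum (⇑φ) χ mu (Function.update z k b) ⊤ := by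
  classical
  simp only [cum, finsum_mem_eq_finite_toFinset_sum _
    (Set.toFinite {σ | σ ∈ IBNC χ ∧ σ ≤ (⊤ : Setoid α)})]
  rw [← Finset.sum_add_distrib]
  refine Finset.sum_congr rfl fun σ _ => ?_
  rw [phiPart_update_add φ σ z k a b, mul_add]

lemma cum_update_smul (φ : A →ₗ[ℂ] ℂ) (χ : α → Letter)
    (mu : Setoid α → Setoid α → ℂ) (z : α → A) (k : α) (c : ℂ) (a : A) :
    cum (⇑φ) χ mu (Function.update z k (c • a)) ⊤
      = c • cum (⇑φ) χ mu (Function.update z k a) ⊤ := by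
  classical
  simp only [cum, finsum_mem_eq_finite_toFinset_sum _
    (Set.toFinite {σ | σ ∈ IBNC χ ∧ σ ≤ (⊤ : Setoid α)})]
  rw [Finset.smul_sum]
  refine Finset.sum_congr rfl fun σ _ => ?_
  rw [phiPart_update_smul φ σ z k c a, smul_eq_mul, smul_eq_mul]
  ring

/-- The cumulant as a multilinear map in the arguments. -/
noncomputable def cumML (φ : A →ₗ[ℂ] ℂ) {n : ℕ} (χ : Fin n → Letter)
    (mu : Setoid (Fin n) → Setoid (Fin n) → ℂ) :
    MultilinearMap ℂ (fun _ : Fin n => A) ℂ where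
  toFun z := cum (⇑φ) χ mu z ⊤
  map_update_add' z k a b := by exact cum_update_add φ χ mu z k a b
  map_update_smul' z k c a := by exact cum_update_smul φ χ mu z k c a

end Aux

/-- For a combinatorially free-free-Boolean independent family of triples
of subalgebras `{(A_{i,ℓ}, A_{i,r}, A_{i,c})}_{i∈I}` of `(A,φ)`, the cumulants are additive
on families supported on disjoint sets of indices: if `ω₁({1,…,n}) ∩ ω₂({1,…,n}) = ∅`,
`z_{1,k} ∈ A_{ω₁(k),χ(k)}` and `z_{2,k} ∈ A_{ω₂(k),χ(k)}`, then
`κ_{χ,1ₙ}(z_{1,1}+z_{2,1},…,z_{1,n}+z_{2,n}) = κ_{χ,1ₙ}(z_{1,•}) + κ_{χ,1ₙ}(z_{2,•})`. -/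
theorem cumulant_additive_of_disjoint {A : Type*} [Ring A] [Algebra ℂ A]
    (φ : A →ₗ[ℂ] ℂ) (hφ : φ 1 = 1) {I : Type*}
    (F : I → Letter → NonUnitalSubalgebra ℂ A) (hF : CombFFB φ F)
    (n : ℕ) (hn : 0 < n) (χ : Fin n → Letter) (ω₁ ω₂ : Fin n → I)
    (hdisj : ∀ k k' : Fin n, ω₁ k ≠ ω₂ k')
    (z₁ z₂ : Fin n → A)
    (hz₁ : ∀ k, z₁ k ∈ F (ω₁ k) (χ k)) (hz₂ : ∀ k, z₂ k ∈ F (ω₂ k) (χ k))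
    (mu : Setoid (Fin n) → Setoid (Fin n) → ℂ) (hmu : IsMobius (IBNC χ) mu) :
    cum (⇑φ) χ mu (fun k => z₁ k + z₂ k) ⊤ =
      cum (⇑φ) χ mu z₁ ⊤ + cum (⇑φ) χ mu z₂ ⊤ := by
  classical
  have hcumML : ∀ z : Fin n → A, cumML φ χ mu z = cum (⇑φ) χ mu z ⊤ := fun _ => rfl
  have hexp : cum (⇑φ) χ mu (fun k => z₁ k + z₂ k) ⊤
      = ∑ s : Finset (Fin n), cumML φ χ mu (s.piecewise z₁ z₂) := by
    have h := (cumML φ χ mu).map_add_univ z₁ z₂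
    rw [← hcumML]
    convert h using 2
    rfl
  rw [hexp]
  have hzero : ∀ s : Finset (Fin n), s ∉ ({∅, Finset.univ} : Finset (Finset (Fin n))) →
      cumML φ χ mu (s.piecewise z₁ z₂) = 0 := by
    intro s hs
    simp only [Finset.mem_insert, Finset.mem_singleton] at hs
    push_neg at hs
    obtain ⟨hne, hnu⟩ := hs
    obtain ⟨k, hk⟩ := hne
    obtain ⟨k', hk'⟩ : ∃ k', k' ∉ s := by
      by_contra h
      push_neg at h
      exact hnu (Finset.eq_univ_iff_forall.mpr h)
    rw [hcumML]
    refine hF n χ (fun j => if j ∈ s then ω₁ j else ω₂ j) (s.piecewise z₁ z₂) ?_ ?_ mu hmu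
    · intro j
      by_cases hj : j ∈ s <;> simp [Finset.piecewise, hj, hz₁ j, hz₂ j]
    · rintro ⟨i, hi⟩
      have h1 : ω₁ k = i := by simpa [hk] using hi k
      have h2 : ω₂ k' = i := by simpa [hk'] using hi k'
      exact hdisj k k' (h1.trans h2.symm)
  rw [← Finset.sum_subset (Finset.subset_univ ({∅, Finset.univ} : Finset (Finset (Fin n))))
    (fun s _ hs => hzero s hs)]
  have hne : (∅ : Finset (Fin n)) ≠ Finset.univ := by
    intro h
    have : (⟨0, hn⟩ : Fin n) ∈ (∅ : Finset (Fin n)) := h ▸ Finset.mem_univ _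
    simp at this
  rw [Finset.sum_pair hne]
  rw [Finset.piecewise_empty, Finset.piecewise_univ, hcumML, hcumML, add_comm]

end FFB
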